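/- Let G be the generating function of a branching random walk on a countable set X with first moments m_{xy} and their iterates m^{(n)}_{xy}, and let q̄ ∈ [0,1]^X be the pointwise limit of the iterates q_0 := 𝟎, q_{n+1} := G(q_n). If q̄(x) < 1 for some x ∈ X, then ∑_{y∈X} m^{(n)}_{xy} ≥ 1 − q̄(x) for every n ∈ ℕ; in particular, global survival starting from x implies liminf_{n→∞} ∑_{y∈X} m^{(n)}_{xy} > 0. -/

import Mathlib

open Filter ENNReal

/-- The generating function of a branching random walk on `X` with offspring
distributions `ν x` on the set of finitely supported functions `X →₀ ℕ`:
`G(q|x) = ∑_f ν_x(f) ∏_y q(y)^{f(y)}`. -/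
noncomputable def brwG {X : Type*} (ν : X → (X →₀ ℕ) → ℝ) (q : X → ℝ) (x : X) : ℝ :=
  ∑' f : X →₀ ℕ, ν x f * f.prod fun y k => q y ^ k

/-- The iterates `q_0 := 0`, `q_{n+1} := G(q_n)`. -/
noncomputable def brwIter {X : Type*} (ν : X → (X →₀ ℕ) → ℝ) : ℕ → X → ℝ
  | 0 => fun _ => 0
  | n + 1 => brwG ν (brwIter ν n)

/-- First moments `m_{xy} := ∑_f f(y) ν_x(f) ∈ [0,∞]`. -/
noncomputable def brwMom {X : Type*} (ν : X → (X →₀ ℕ) → ℝ) (x y : X) : ℝ≥0∞ :=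
  ∑' f : X →₀ ℕ, (f y : ℝ≥0∞) * ENNReal.ofReal (ν x f)

/-- Iterated first moments: `m⁽⁰⁾_{xy} = δ_{xy}`,
`m⁽ⁿ⁺¹⁾_{xy} = ∑_w m⁽ⁿ⁾_{xw} m_{wy}` (computed in `[0,∞]`). -/
noncomputable def brwMomIter {X : Type*} [DecidableEq X]
    (ν : X → (X →₀ ℕ) → ℝ) : ℕ → X → X → ℝ≥0∞
  | 0 => fun x y => if x = y then 1 else 0
  | n + 1 => fun x y => ∑' w : X, brwMomIter ν n x w * brwMom ν w y

section Aux

variable {X : Type*}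

lemma brw_prod_nonneg {q : X → ℝ} (hq0 : ∀ y, 0 ≤ q y) (f : X →₀ ℕ) :
    0 ≤ f.prod fun y k => q y ^ k :=
  Finset.prod_nonneg fun y _ => pow_nonneg (hq0 y) _

lemma brw_prod_le_one {q : X → ℝ} (hq0 : ∀ y, 0 ≤ q y) (hq1 : ∀ y, q y ≤ 1) (f : X →₀ ℕ) :
    f.prod (fun y k => q y ^ k) ≤ 1 :=
  Finset.prod_le_one (fun y _ => pow_nonneg (hq0 y) _)
    (fun y _ => pow_le_one₀ (hq0 y) (hq1 y))

lemma brwG_summable (ν : X → (X →₀ ℕ) → ℝ) (hν0 : ∀ x f, 0 ≤ ν x f)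
    (hν1 : ∀ x, HasSum (ν x) 1) {q : X → ℝ} (hq0 : ∀ y, 0 ≤ q y) (hq1 : ∀ y, q y ≤ 1) (x : X) :
    Summable fun f : X →₀ ℕ => ν x f * f.prod fun y k => q y ^ k := by
  refine Summable.of_nonneg_of_le
    (fun f => mul_nonneg (hν0 x f) (brw_prod_nonneg hq0 f))
    (fun f => mul_le_of_le_one_right (hν0 x f) (brw_prod_le_one hq0 hq1 f))
    (hν1 x).summable

lemma brwG_nonneg (ν : X → (X →₀ ℕ) → ℝ) (hν0 : ∀ x f, 0 ≤ ν x f)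
    {q : X → ℝ} (hq0 : ∀ y, 0 ≤ q y) (x : X) : 0 ≤ brwG ν q x :=
  tsum_nonneg fun f => mul_nonneg (hν0 x f) (brw_prod_nonneg hq0 f)

lemma brwG_le_one (ν : X → (X →₀ ℕ) → ℝ) (hν0 : ∀ x f, 0 ≤ ν x f)
    (hν1 : ∀ x, HasSum (ν x) 1) {q : X → ℝ} (hq0 : ∀ y, 0 ≤ q y) (hq1 : ∀ y, q y ≤ 1) (x : X) :
    brwG ν q x ≤ 1 := by
  have h := Summable.tsum_le_tsum
    (fun f => mul_le_of_le_one_right (hν0 x f) (brw_prod_le_one hq0 hq1 f))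
    (brwG_summable ν hν0 hν1 hq0 hq1 x) (hν1 x).summable
  simpa [brwG, (hν1 x).tsum_eq] using h

lemma brwG_mono (ν : X → (X →₀ ℕ) → ℝ) (hν0 : ∀ x f, 0 ≤ ν x f)
    (hν1 : ∀ x, HasSum (ν x) 1) {q q' : X → ℝ} (hq0 : ∀ y, 0 ≤ q y)
    (hqq' : ∀ y, q y ≤ q' y) (hq1' : ∀ y, q' y ≤ 1) (x : X) :
    brwG ν q x ≤ brwG ν q' x := by
  have hq0' : ∀ y, 0 ≤ q' y := fun y => le_trans (hq0 y) (hqq' y)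
  have hq1 : ∀ y, q y ≤ 1 := fun y => le_trans (hqq' y) (hq1' y)
  refine Summable.tsum_le_tsum (fun f => ?_) (brwG_summable ν hν0 hν1 hq0 hq1 x)
    (brwG_summable ν hν0 hν1 hq0' hq1' x)
  refine mul_le_mul_of_nonneg_left ?_ (hν0 x f)
  exact Finset.prod_le_prod (fun y _ => pow_nonneg (hq0 y) _)
    (fun y _ => pow_le_pow_left₀ (hq0 y) (hqq' y) _)

lemma brwIter_bounds (ν : X → (X →₀ ℕ) → ℝ) (hν0 : ∀ x f, 0 ≤ ν x f)
    (hν1 : ∀ x, HasSum (ν x) 1) : ∀ n, (∀ y, 0 ≤ brwIter ν n y) ∧ (∀ y, brwIter ν n y ≤ 1)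
  | 0 => ⟨fun _ => le_refl 0, fun _ => zero_le_one⟩
  | n + 1 => by
    obtain ⟨h0, h1⟩ := brwIter_bounds ν hν0 hν1 n
    exact ⟨fun y => brwG_nonneg ν hν0 h0 y, fun y => brwG_le_one ν hν0 hν1 h0 h1 y⟩

lemma brwIter_mono (ν : X → (X →₀ ℕ) → ℝ) (hν0 : ∀ x f, 0 ≤ ν x f)
    (hν1 : ∀ x, HasSum (ν x) 1) : ∀ n, ∀ y, brwIter ν n y ≤ brwIter ν (n + 1) y
  | 0 => fun y => brwG_nonneg ν hν0 (fun _ => le_refl 0) y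
  | n + 1 => fun y =>
    brwG_mono ν hν0 hν1 (brwIter_bounds ν hν0 hν1 n).1 (brwIter_mono ν hν0 hν1 n)
      (brwIter_bounds ν hν0 hν1 (n + 1)).2 y

/-- `1 - ∏ g ≤ ∑ (1 - g)` for `g` taking values in `[0,1]`. -/
lemma one_sub_prod_le_sum {ι : Type*} (s : Finset ι) (g : ι → ℝ)
    (h0 : ∀ i ∈ s, 0 ≤ g i) (h1 : ∀ i ∈ s, g i ≤ 1) :
    1 - ∏ i ∈ s, g i ≤ ∑ i ∈ s, (1 - g i) := by
  induction s using Finset.cons_induction with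
  | empty => simp
  | cons a s ha ih =>
    rw [Finset.prod_cons, Finset.sum_cons]
    have h0a := h0 a (Finset.mem_cons_self a s)
    have h1a := h1 a (Finset.mem_cons_self a s)
    have ihs := ih (fun i hi => h0 i (Finset.mem_cons_of_mem hi))
      (fun i hi => h1 i (Finset.mem_cons_of_mem hi))
    have hP0 : 0 ≤ ∏ i ∈ s, g i :=
      Finset.prod_nonneg fun i hi => h0 i (Finset.mem_cons_of_mem hi)
    have hP1 : ∏ i ∈ s, g i ≤ 1 :=
      Finset.prod_le_one (fun i hi => h0 i (Finset.mem_cons_of_mem hi))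
        (fun i hi => h1 i (Finset.mem_cons_of_mem hi))
    nlinarith

lemma one_sub_pow_le (q : ℝ) (h0 : 0 ≤ q) (h1 : q ≤ 1) : ∀ k : ℕ, 1 - q ^ k ≤ k * (1 - q)
  | 0 => by simp
  | k + 1 => by
    have ih := one_sub_pow_le q h0 h1 k
    have hk : q ^ k ≤ 1 := pow_le_one₀ h0 h1
    have hk0 : 0 ≤ q ^ k := pow_nonneg h0 k
    rw [pow_succ]
    push_cast
    nlinarith [mul_nonneg (by linarith : (0:ℝ) ≤ 1 - q) (by linarith : (0:ℝ) ≤ 1 - q ^ k)]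

/-- Key one-step inequality: `1 - G(q)(x) ≤ ∑_y m_{xy} (1 - q(y))`. -/
lemma brw_one_step (ν : X → (X →₀ ℕ) → ℝ) (hν0 : ∀ x f, 0 ≤ ν x f)
    (hν1 : ∀ x, HasSum (ν x) 1) {q : X → ℝ} (hq0 : ∀ y, 0 ≤ q y) (hq1 : ∀ y, q y ≤ 1) (x : X) :
    ENNReal.ofReal (1 - brwG ν q x) ≤ ∑' y : X, brwMom ν x y * ENNReal.ofReal (1 - q y) := by
  set P : (X →₀ ℕ) → ℝ := fun f => f.prod fun y k => q y ^ k with hP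
  have hsum : Summable fun f : X →₀ ℕ => ν x f * P f := brwG_summable ν hν0 hν1 hq0 hq1 x
  -- 1 - G(q)(x) = ∑' f, ν x f * (1 - P f)
  have hdiff : HasSum (fun f : X →₀ ℕ => ν x f * (1 - P f)) (1 - brwG ν q x) := by
    have := (hν1 x).sub hsum.hasSum
    rw [show brwG ν q x = ∑' f, ν x f * P f from rfl]
    simpa [mul_sub] using this
  have hterm_nonneg : ∀ f : X →₀ ℕ, 0 ≤ ν x f * (1 - P f) := fun f =>
    mul_nonneg (hν0 x f) (by linarith [brw_prod_le_one hq0 hq1 f])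
  rw [← hdiff.tsum_eq, ENNReal.ofReal_tsum_of_nonneg hterm_nonneg hdiff.summable]
  -- bound each term
  have hbound : ∀ f : X →₀ ℕ,
      ENNReal.ofReal (ν x f * (1 - P f)) ≤
        ENNReal.ofReal (ν x f) * ∑' y : X, (f y : ℝ≥0∞) * ENNReal.ofReal (1 - q y) := by
    intro f
    rw [ENNReal.ofReal_mul (hν0 x f)]
    refine mul_le_mul_of_nonneg_left ?_ zero_le
    have h1 : 1 - P f ≤ ∑ y ∈ f.support, (f y : ℝ) * (1 - q y) := by
      calc 1 - P f ≤ ∑ y ∈ f.support, (1 - q y ^ f y) :=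
            one_sub_prod_le_sum f.support _ (fun y _ => pow_nonneg (hq0 y) _)
              (fun y _ => pow_le_one₀ (hq0 y) (hq1 y))
        _ ≤ ∑ y ∈ f.support, (f y : ℝ) * (1 - q y) :=
            Finset.sum_le_sum fun y _ => one_sub_pow_le (q y) (hq0 y) (hq1 y) (f y)
    calc ENNReal.ofReal (1 - P f) ≤ ENNReal.ofReal (∑ y ∈ f.support, (f y : ℝ) * (1 - q y)) :=
          ENNReal.ofReal_le_ofReal h1
      _ = ∑ y ∈ f.support, ENNReal.ofReal ((f y : ℝ) * (1 - q y)) :=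
          ENNReal.ofReal_sum_of_nonneg fun y _ =>
            mul_nonneg (Nat.cast_nonneg _) (by linarith [hq1 y])
      _ = ∑ y ∈ f.support, (f y : ℝ≥0∞) * ENNReal.ofReal (1 - q y) := by
          refine Finset.sum_congr rfl fun y _ => ?_
          rw [ENNReal.ofReal_mul (Nat.cast_nonneg _), ENNReal.ofReal_natCast]
      _ ≤ ∑' y : X, (f y : ℝ≥0∞) * ENNReal.ofReal (1 - q y) := ENNReal.sum_le_tsum _
  calc (∑' f : X →₀ ℕ, ENNReal.ofReal (ν x f * (1 - P f)))
      ≤ ∑' f : X →₀ ℕ, ENNReal.ofReal (ν x f) *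
          ∑' y : X, (f y : ℝ≥0∞) * ENNReal.ofReal (1 - q y) := ENNReal.tsum_le_tsum hbound
    _ = ∑' f : X →₀ ℕ, ∑' y : X,
          ENNReal.ofReal (ν x f) * ((f y : ℝ≥0∞) * ENNReal.ofReal (1 - q y)) := by
        simp_rw [ENNReal.tsum_mul_left]
    _ = ∑' y : X, ∑' f : X →₀ ℕ,
          ENNReal.ofReal (ν x f) * ((f y : ℝ≥0∞) * ENNReal.ofReal (1 - q y)) :=
        ENNReal.tsum_comm
    _ = ∑' y : X, brwMom ν x y * ENNReal.ofReal (1 - q y) := by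
        refine tsum_congr fun y => ?_
        rw [brwMom, ← ENNReal.tsum_mul_right]
        refine tsum_congr fun f => by ring

/-- `m⁽ⁿ⁺¹⁾ = m · m⁽ⁿ⁾` as well. -/
lemma brwMomIter_succ_left [DecidableEq X] (ν : X → (X →₀ ℕ) → ℝ) :
    ∀ (n : ℕ) (x y : X),
      brwMomIter ν (n + 1) x y = ∑' w : X, brwMom ν x w * brwMomIter ν n w y
  | 0 => fun x y => by
    have h1 : (∑' w : X, (if x = w then (1 : ℝ≥0∞) else 0) * brwMom ν w y) = brwMom ν x y := by
      rw [tsum_eq_single x (fun w hw => by simp [Ne.symm hw])]; simp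
    have h2 : (∑' w : X, brwMom ν x w * brwMomIter ν 0 w y) = brwMom ν x y := by
      rw [tsum_eq_single y (fun w hw => by simp [brwMomIter, hw])]
      simp [brwMomIter]
    exact h1.trans h2.symm
  | n + 1 => fun x y => by
    show (∑' w : X, brwMomIter ν (n + 1) x w * brwMom ν w y) = _
    calc (∑' w : X, brwMomIter ν (n + 1) x w * brwMom ν w y)
        = ∑' w : X, (∑' u : X, brwMom ν x u * brwMomIter ν n u w) * brwMom ν w y := by
          simp_rw [brwMomIter_succ_left ν n]
      _ = ∑' w : X, ∑' u : X, brwMom ν x u * brwMomIter ν n u w * brwMom ν w y := by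
          simp_rw [ENNReal.tsum_mul_right]
      _ = ∑' u : X, ∑' w : X, brwMom ν x u * brwMomIter ν n u w * brwMom ν w y :=
          ENNReal.tsum_comm
      _ = ∑' u : X, brwMom ν x u * brwMomIter ν (n + 1) u y := by
          refine tsum_congr fun u => ?_
          rw [show brwMomIter ν (n + 1) u y = ∑' w : X, brwMomIter ν n u w * brwMom ν w y
            from rfl, ← ENNReal.tsum_mul_left]
          exact tsum_congr fun w => by ring

lemma brw_key [DecidableEq X] (ν : X → (X →₀ ℕ) → ℝ) (hν0 : ∀ x f, 0 ≤ ν x f)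
    (hν1 : ∀ x, HasSum (ν x) 1) :
    ∀ (n : ℕ) (x : X),
      ENNReal.ofReal (1 - brwIter ν n x) ≤ ∑' y : X, brwMomIter ν n x y
  | 0 => fun x => by
    have h : (brwMomIter ν 0 x x) = 1 := by simp [brwMomIter]
    calc ENNReal.ofReal (1 - brwIter ν 0 x) = 1 := by simp [brwIter]
      _ ≤ ∑' y : X, brwMomIter ν 0 x y := h ▸ ENNReal.le_tsum x
  | n + 1 => fun x => by
    have hq0 := (brwIter_bounds ν hν0 hν1 n).1
    have hq1 := (brwIter_bounds ν hν0 hν1 n).2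
    calc ENNReal.ofReal (1 - brwIter ν (n + 1) x)
        ≤ ∑' y : X, brwMom ν x y * ENNReal.ofReal (1 - brwIter ν n y) :=
          brw_one_step ν hν0 hν1 hq0 hq1 x
      _ ≤ ∑' y : X, brwMom ν x y * ∑' z : X, brwMomIter ν n y z :=
          ENNReal.tsum_le_tsum fun y => mul_le_mul_right (brw_key ν hν0 hν1 n y) _
      _ = ∑' y : X, ∑' z : X, brwMom ν x y * brwMomIter ν n y z := by
          simp_rw [ENNReal.tsum_mul_left]
      _ = ∑' z : X, ∑' y : X, brwMom ν x y * brwMomIter ν n y z := ENNReal.tsum_comm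
      _ = ∑' z : X, brwMomIter ν (n + 1) x z := by
          refine tsum_congr fun z => (brwMomIter_succ_left ν n x z).symm

end Aux

/-- if `q̄(x) < 1` then `∑_y m⁽ⁿ⁾_{xy} ≥ 1 − q̄(x)` for every `n`;
in particular global survival from `x` implies
`liminf_n ∑_y m⁽ⁿ⁾_{xy} > 0`. -/
theorem brw_survival_implies_moment_liminf_pos {X : Type*} [Countable X] [DecidableEq X]
    (ν : X → (X →₀ ℕ) → ℝ)
    (hν0 : ∀ x f, 0 ≤ ν x f) (hν1 : ∀ x, HasSum (ν x) 1)
    (qbar : X → ℝ)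
    (hqbar : ∀ x, Tendsto (fun n => brwIter ν n x) atTop (nhds (qbar x)))
    (x : X) (hx : qbar x < 1) :
    (∀ n : ℕ, ENNReal.ofReal (1 - qbar x) ≤ ∑' y : X, brwMomIter ν n x y) ∧
      0 < liminf (fun n : ℕ => ∑' y : X, brwMomIter ν n x y) atTop := by
  have hmono : Monotone fun n => brwIter ν n x :=
    monotone_nat_of_le_succ fun n => brwIter_mono ν hν0 hν1 n x
  have hle : ∀ n, brwIter ν n x ≤ qbar x := fun n => hmono.ge_of_tendsto (hqbar x) n
  have hmain : ∀ n : ℕ, ENNReal.ofReal (1 - qbar x) ≤ ∑' y : X, brwMomIter ν n x y := by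
    intro n
    calc ENNReal.ofReal (1 - qbar x) ≤ ENNReal.ofReal (1 - brwIter ν n x) :=
          ENNReal.ofReal_le_ofReal (by linarith [hle n])
      _ ≤ ∑' y : X, brwMomIter ν n x y := brw_key ν hν0 hν1 n x
  have hpos : (0 : ℝ≥0∞) < ENNReal.ofReal (1 - qbar x) := ENNReal.ofReal_pos.mpr (by linarith)
  exact ⟨hmain, lt_of_lt_of_le hpos
    (le_liminf_of_le (by isBoundedDefault) (Eventually.of_forall hmain))⟩
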